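/- Disentanglement of impurity decrease: under the additive model f(x) = ∑_{k=1}^K f_k(x_{I_k}) with mutually independent blocks x_{I_k}, suppose the current residual is r = f(x) − g(x) where g = ∑ over fitted trees each splitting features within a single block. Let t be a leaf of a fitted tree splitting only features in I₁, with projection t' onto the I₁ coordinates, and consider a candidate split s of t on a feature m ∈ I₂ at threshold τ. Then the population impurity decrease satisfies Δ(s, t, r) = π₁(t') · Δ(s', t₀, r), where s' is the split of a brand-new root node t₀ on feature m at threshold τ and π₁(t') ≤ 1 is the probability of t'. In particular Δ(s', t₀, r) ≥ Δ(s, t, r), so splitting a new root on the out-of-block feature achieves at least as large an impurity decrease. -/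

import Mathlib

open MeasureTheory ProbabilityTheory Set

lemma indicator_mul_indicator_aux {Ω : Type*} (T S : Set Ω) (f : Ω → ℝ) (ω : Ω) :
    (T ∩ S).indicator f ω = T.indicator f ω * S.indicator (fun _ => (1:ℝ)) ω := by
  by_cases hT : ω ∈ T <;> by_cases hS : ω ∈ S <;>
    simp [Set.indicator_apply, hT, hS]

lemma disent_aux {Ω : Type*} [MeasurableSpace Ω]
    (μ : Measure Ω) [IsProbabilityMeasure μ]
    (T S : Set Ω) (hmT : MeasurableSet T) (hmS : MeasurableSet S)
    (A B : Ω → ℝ) (hAint : Integrable A μ) (hBint : Integrable B μ)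
    (hindep : IndepFun (fun ω => (A ω, T.indicator (fun _ => (1 : ℝ)) ω))
                       (fun ω => (B ω, S.indicator (fun _ => (1 : ℝ)) ω)) μ) :
    (μ (T ∩ S)).toReal = (μ T).toReal * (μ S).toReal ∧
    (∫ ω in T ∩ S, (A ω + B ω) ∂μ)
      = (∫ ω, T.indicator A ω ∂μ) * (μ S).toReal
        + (μ T).toReal * (∫ ω, S.indicator B ω ∂μ) := by
  set iT := T.indicator (fun _ => (1:ℝ)) with hiT
  set iS := S.indicator (fun _ => (1:ℝ)) with hiS
  have hiTint : Integrable iT μ := (integrable_const (1:ℝ)).indicator hmT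
  have hiSint : Integrable iS μ := (integrable_const (1:ℝ)).indicator hmS
  have hTAint : Integrable (T.indicator A) μ := hAint.indicator hmT
  have hSBint : Integrable (S.indicator B) μ := hBint.indicator hmS
  -- independence facts
  have hII : IndepFun iT iS μ := hindep.comp measurable_snd measurable_snd
  have hAS : IndepFun (T.indicator A) iS μ := by
    have := hindep.comp (φ := fun p : ℝ × ℝ => p.1 * p.2) (ψ := Prod.snd)
      (measurable_fst.mul measurable_snd) measurable_snd
    have heq : (fun ω => A ω * iT ω) = T.indicator A := by
      funext ω; by_cases h : ω ∈ T <;> simp [hiT, Set.indicator_apply, h]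
    simpa [Function.comp_def, heq] using this
  have hTB : IndepFun iT (S.indicator B) μ := by
    have := hindep.comp (φ := Prod.snd) (ψ := fun p : ℝ × ℝ => p.1 * p.2)
      measurable_snd (measurable_fst.mul measurable_snd)
    have heq : (fun ω => B ω * iS ω) = S.indicator B := by
      funext ω; by_cases h : ω ∈ S <;> simp [hiS, Set.indicator_apply, h]
    simpa [Function.comp_def, heq] using this
  have hmeas : ∀ (E : Set Ω), MeasurableSet E →
      (μ E).toReal = ∫ ω, E.indicator (fun _ => (1:ℝ)) ω ∂μ := by
    intro E hE
    rw [integral_indicator_const (1:ℝ) hE]; simp; rfl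
  constructor
  · have h1 : (μ (T ∩ S)).toReal = ∫ ω, (T ∩ S).indicator (fun _ => (1:ℝ)) ω ∂μ :=
      hmeas _ (hmT.inter hmS)
    have h2 : (fun ω => (T ∩ S).indicator (fun _ => (1:ℝ)) ω) = fun ω => iT ω * iS ω := by
      funext ω; exact indicator_mul_indicator_aux T S _ ω
    rw [h1, h2]
    have := hII.integral_mul_eq_mul_integral hiTint.aestronglyMeasurable hiSint.aestronglyMeasurable
    simp only [Pi.mul_apply] at this
    rw [this,
      hmeas T hmT, hmeas S hmS]
  · rw [← integral_indicator (hmT.inter hmS)]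
    have h2 : (fun ω => (T ∩ S).indicator (fun ω => A ω + B ω) ω)
        = fun ω => T.indicator A ω * iS ω + iT ω * S.indicator B ω := by
      funext ω; by_cases hT : ω ∈ T <;> by_cases hS : ω ∈ S <;>
        simp [Set.indicator_apply, hT, hS, hiT, hiS]
    rw [show (∫ ω, (T ∩ S).indicator (fun ω => A ω + B ω) ω ∂μ)
        = ∫ ω, (T.indicator A ω * iS ω + iT ω * S.indicator B ω) ∂μ by rw [← h2]]
    have e3 := integral_add (hAS.integrable_mul hTAint hiSint) (hTB.integrable_mul hiTint hSBint)
    simp only [Pi.add_apply, Pi.mul_apply] at e3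
    rw [e3]
    have e1 := hAS.integral_mul_eq_mul_integral hTAint.aestronglyMeasurable hiSint.aestronglyMeasurable
    have e2 := hTB.integral_mul_eq_mul_integral hiTint.aestronglyMeasurable hSBint.aestronglyMeasurable
    rw [show (∫ a, T.indicator A a * iS a ∂μ) = integral μ (T.indicator A * iS) from rfl,
      show (∫ a, iT a * S.indicator B a ∂μ) = integral μ (iT * S.indicator B) from rfl,
      e1, e2, hmeas S hmS, hmeas T hmT]

/-- Disentanglement of the population impurity decrease: suppose the residual
decomposes as `r = A + B`, where the pair `(A, 1_T)` (the within-block part and the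
indicator of the current leaf `T`, which constrains only block-1 features) is
independent of the pair `(B, 1_S)` (the block-2 part and the indicator of the
candidate split event `S = {x_m ≤ τ}` on a block-2 feature).  Then the impurity
decrease of splitting the leaf `T` by `S` factors as
`Δ(s, t, r) = π(T) · Δ(s', t₀, r)`, where `Δ(s', t₀, r)` is the impurity decrease of
splitting a brand-new root node by `S`; in particular `Δ(s, t, r) ≤ Δ(s', t₀, r)`. -/
theorem disentanglement_impurity_factorization {Ω : Type*} [MeasurableSpace Ω]
    (μ : Measure Ω) [IsProbabilityMeasure μ]
    (T S : Set Ω) (hmT : MeasurableSet T) (hmS : MeasurableSet S)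
    (hT : μ T ≠ 0) (hS : μ S ≠ 0) (hSc : μ Sᶜ ≠ 0)
    (A B r : Ω → ℝ) (hr : ∀ ω, r ω = A ω + B ω)
    (hAint : Integrable A μ) (hBint : Integrable B μ)
    (hindep : IndepFun (fun ω => (A ω, T.indicator (fun _ => (1 : ℝ)) ω))
                       (fun ω => (B ω, S.indicator (fun _ => (1 : ℝ)) ω)) μ)
    (em : Set Ω → ℝ) (hem : ∀ E, em E = (∫ ω in E, r ω ∂μ) / (μ E).toReal)
    (ΔT Δ0 : ℝ)
    (hΔT : ΔT = ((μ (T ∩ S)).toReal * (μ (T ∩ Sᶜ)).toReal / (μ T).toReal)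
              * (em (T ∩ S) - em (T ∩ Sᶜ)) ^ 2)
    (hΔ0 : Δ0 = (μ S).toReal * (μ Sᶜ).toReal * (em S - em Sᶜ) ^ 2) :
    ΔT = (μ T).toReal * Δ0 ∧ ΔT ≤ Δ0 := by
  -- derived independence hypotheses
  have hScind : (fun ω => (B ω, Sᶜ.indicator (fun _ => (1:ℝ)) ω))
      = (fun p : ℝ × ℝ => (p.1, 1 - p.2)) ∘ (fun ω => (B ω, S.indicator (fun _ => (1:ℝ)) ω)) := by
    funext ω; by_cases h : ω ∈ S <;> simp [Set.indicator_apply, h]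
  have hUind : (fun ω => (A ω, (univ : Set Ω).indicator (fun _ => (1:ℝ)) ω))
      = (fun p : ℝ × ℝ => (p.1, 1)) ∘ (fun ω => (A ω, T.indicator (fun _ => (1:ℝ)) ω)) := by
    funext ω; simp
  have hindep2 : IndepFun (fun ω => (A ω, T.indicator (fun _ => (1 : ℝ)) ω))
      (fun ω => (B ω, Sᶜ.indicator (fun _ => (1 : ℝ)) ω)) μ := by
    rw [hScind]
    exact (hindep.comp measurable_id (measurable_fst.prodMk
      (measurable_const.sub measurable_snd)))
  have hindep3 : IndepFun (fun ω => (A ω, (univ : Set Ω).indicator (fun _ => (1 : ℝ)) ω))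
      (fun ω => (B ω, S.indicator (fun _ => (1 : ℝ)) ω)) μ := by
    rw [hUind]
    exact hindep.comp (measurable_fst.prodMk measurable_const) measurable_id
  have hindep4 : IndepFun (fun ω => (A ω, (univ : Set Ω).indicator (fun _ => (1 : ℝ)) ω))
      (fun ω => (B ω, Sᶜ.indicator (fun _ => (1 : ℝ)) ω)) μ := by
    rw [hUind, hScind]
    exact hindep.comp (measurable_fst.prodMk measurable_const)
      (measurable_fst.prodMk (measurable_const.sub measurable_snd))
  have h1 := disent_aux μ T S hmT hmS A B hAint hBint hindep
  have h2 := disent_aux μ T Sᶜ hmT hmS.compl A B hAint hBint hindep2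
  have h3 := disent_aux μ univ S MeasurableSet.univ hmS A B hAint hBint hindep3
  have h4 := disent_aux μ univ Sᶜ MeasurableSet.univ hmS.compl A B hAint hBint hindep4
  simp only [Set.univ_inter, Set.indicator_univ, measure_univ, ENNReal.toReal_one,
    one_mul] at h1 h2 h3 h4
  set pT := (μ T).toReal with hpT
  set pS := (μ S).toReal with hpS
  set pSc := (μ Sᶜ).toReal with hpSc
  have hpT0 : 0 < pT := ENNReal.toReal_pos hT (measure_ne_top μ T)
  have hpS0 : 0 < pS := ENNReal.toReal_pos hS (measure_ne_top μ S)
  have hpSc0 : 0 < pSc := ENNReal.toReal_pos hSc (measure_ne_top μ Sᶜ)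
  have hpT1 : pT ≤ 1 := by
    rw [hpT]; exact ENNReal.toReal_le_of_le_ofReal zero_le_one (by simp [prob_le_one])
  set α := ∫ ω, T.indicator A ω ∂μ with hα
  set a := ∫ ω, A ω ∂μ with ha
  set βS := ∫ ω, S.indicator B ω ∂μ with hβS
  set βSc := ∫ ω, Sᶜ.indicator B ω ∂μ with hβSc
  have hrint : ∀ (E : Set Ω), (∫ ω in E, r ω ∂μ) = ∫ ω in E, (A ω + B ω) ∂μ := by
    intro E; exact integral_congr_ae (Filter.Eventually.of_forall fun ω => hr ω)
  -- express the four conditional means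
  have emTS : em (T ∩ S) = (α * pS + pT * βS) / (pT * pS) := by
    rw [hem, hrint, h1.2, h1.1]
  have emTSc : em (T ∩ Sᶜ) = (α * pSc + pT * βSc) / (pT * pSc) := by
    rw [hem, hrint, h2.2, h2.1]
  have emS : em S = (a * pS + βS) / pS := by
    rw [hem, hrint, h3.2, ← hpS]
  have emSc : em Sᶜ = (a * pSc + βSc) / pSc := by
    rw [hem, hrint, h4.2, ← hpSc]
  have hd : em (T ∩ S) - em (T ∩ Sᶜ) = em S - em Sᶜ := by
    rw [emTS, emTSc, emS, emSc]
    field_simp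
    ring
  have hfact : ΔT = pT * Δ0 := by
    rw [hΔT, hΔ0, h1.1, h2.1, hd]
    field_simp
  refine ⟨hfact, ?_⟩
  have hΔ0nonneg : 0 ≤ Δ0 := by rw [hΔ0]; positivity
  calc ΔT = pT * Δ0 := hfact
    _ ≤ 1 * Δ0 := by nlinarith
    _ = Δ0 := one_mul Δ0
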